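/- The sum of two u-L-weakly compact operators is u-L-weakly compact: if T, S : X → E are u-L-weakly compact, then every disjoint sequence in sol((T+S)(U)) is un-convergent to 0. -/

import Mathlib

open Filter

/-- A sequence in a normed lattice is unbounded norm (un-) convergent to `0`. -/
def UnNullSeq {F : Type*} [NormedAddCommGroup F] [Lattice F] [IsOrderedAddMonoid F] [HasSolidNorm F] (y : ℕ → F) : Prop :=
  ∀ w : F, 0 ≤ w → Tendsto (fun n => ‖|y n| ⊓ w‖) atTop (nhds 0)

/-- The solid hull of the image of the closed unit ball under `T`. -/
def SolTU {X E : Type*} [NormedAddCommGroup X] [NormedSpace ℝ X]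
    [NormedAddCommGroup E] [Lattice E] [IsOrderedAddMonoid E] [HasSolidNorm E] [NormedSpace ℝ E] (T : X →L[ℝ] E) : Set E :=
  {y : E | ∃ u : X, ‖u‖ ≤ 1 ∧ |y| ≤ |T u|}

/-- `T` is unbounded L-weakly compact. -/
def ULWeaklyCompact {X E : Type*} [NormedAddCommGroup X] [NormedSpace ℝ X]
    [NormedAddCommGroup E] [Lattice E] [IsOrderedAddMonoid E] [HasSolidNorm E] [NormedSpace ℝ E] (T : X →L[ℝ] E) : Prop :=
  ∀ y : ℕ → E, (∀ n, y n ∈ SolTU T) → (∀ n m, n ≠ m → |y n| ⊓ |y m| = 0) →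
    UnNullSeq y

lemma myPosPart_eq {E : Type*} [Lattice E] [AddCommGroup E]
    [CovariantClass E E (· + ·) (· ≤ ·)] (a c : E) : a - a ⊓ c = (a - c) ⊔ 0 := by
  rw [sub_eq_add_neg, neg_inf, add_sup, ← sub_eq_add_neg, ← sub_eq_add_neg, sub_self, sup_comm]

lemma myInf_add_inf {E : Type*} [Lattice E] [AddCommGroup E]
    [CovariantClass E E (· + ·) (· ≤ ·)] (a b w : E) (ha : 0 ≤ a) (hb : 0 ≤ b)
    (hw : 0 ≤ w) : (a + b) ⊓ w ≤ a ⊓ w + b ⊓ w := by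
  have h : a ⊓ w + b ⊓ w = ((a ⊓ w + b) ⊓ (a ⊓ w + w)) := by rw [add_inf]
  rw [h, inf_add, inf_add]
  refine le_inf (le_inf ?_ ?_) (le_inf ?_ ?_)
  · exact inf_le_left
  · exact inf_le_right.trans (le_add_of_nonneg_right hb)
  · exact inf_le_right.trans (le_add_of_nonneg_left ha)
  · exact inf_le_right.trans (le_add_of_nonneg_left hw)

set_option maxHeartbeats 1000000

/-- the sum of two u-L-weakly compact operators is u-L-weakly
compact. -/
theorem uLWeaklyCompact_add
    {X E : Type*} [NormedAddCommGroup X] [NormedSpace ℝ X] [CompleteSpace X]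
    [NormedAddCommGroup E] [Lattice E] [IsOrderedAddMonoid E] [HasSolidNorm E] [NormedSpace ℝ E] [CompleteSpace E]
    (T S : X →L[ℝ] E) (hT : ULWeaklyCompact T) (hS : ULWeaklyCompact S) :
    ULWeaklyCompact (T + S) := by
  intro y hy hdisj
  choose u hu hle using hy
  set a : ℕ → E := fun n => |y n| ⊓ |T (u n)| with ha_def
  set b : ℕ → E := fun n => |y n| - a n with hb_def
  have ha0 : ∀ n, 0 ≤ a n := fun n => le_inf (abs_nonneg _) (abs_nonneg _)
  have hb_eq : ∀ n, b n = (|y n| - |T (u n)|) ⊔ 0 := fun n => myPosPart_eq _ _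
  have hb0 : ∀ n, 0 ≤ b n := fun n => (hb_eq n).symm ▸ le_sup_right
  have hsum : ∀ n, |y n| = a n + b n := fun n => by
    show |y n| = a n + (|y n| - a n); abel
  have haley : ∀ n, a n ≤ |y n| := fun n => inf_le_left
  have hbley : ∀ n, b n ≤ |y n| := fun n =>
    sub_le_self _ (ha0 n)
  have hbS : ∀ n, b n ≤ |S (u n)| := fun n => by
    rw [hb_eq n]
    refine sup_le (sub_le_iff_le_add.2 ?_) (abs_nonneg _)
    have h := hle n
    rw [ContinuousLinearMap.add_apply] at h
    exact (h.trans ((abs_add_le (T (u n)) (S (u n))).trans_eq (add_comm _ _)))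
  -- membership and disjointness
  have haT : ∀ n, a n ∈ SolTU T := fun n =>
    ⟨u n, hu n, by rw [abs_of_nonneg (ha0 n)]; exact inf_le_right⟩
  have hbSsol : ∀ n, b n ∈ SolTU S := fun n =>
    ⟨u n, hu n, by rw [abs_of_nonneg (hb0 n)]; exact hbS n⟩
  have hdisj' : ∀ (z : ℕ → E), (∀ n, 0 ≤ z n) → (∀ n, z n ≤ |y n|) →
      ∀ n m, n ≠ m → |z n| ⊓ |z m| = 0 := by
    intro z hz0 hzle n m hnm
    have h1 : |z n| ⊓ |z m| ≤ |y n| ⊓ |y m| := by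
      rw [abs_of_nonneg (hz0 n), abs_of_nonneg (hz0 m)]
      exact inf_le_inf (hzle n) (hzle m)
    have h2 : 0 ≤ |z n| ⊓ |z m| := le_inf (abs_nonneg _) (abs_nonneg _)
    exact le_antisymm (h1.trans_eq (hdisj n m hnm)) h2
  have hTa := hT a haT (hdisj' a ha0 haley)
  have hSb := hS b hbSsol (hdisj' b hb0 hbley)
  intro w hw
  have hTa' := hTa w hw
  have hSb' := hSb w hw
  have key : ∀ n, ‖|y n| ⊓ w‖ ≤ ‖|a n| ⊓ w‖ + ‖|b n| ⊓ w‖ := by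
    intro n
    have h1 : |y n| ⊓ w ≤ a n ⊓ w + b n ⊓ w := by
      rw [hsum n]; exact myInf_add_inf _ _ _ (ha0 n) (hb0 n) hw
    have h0 : 0 ≤ |y n| ⊓ w := le_inf (abs_nonneg _) hw
    have hsum0 : 0 ≤ a n ⊓ w + b n ⊓ w :=
      add_nonneg (le_inf (ha0 n) hw) (le_inf (hb0 n) hw)
    have hnorm : ‖|y n| ⊓ w‖ ≤ ‖a n ⊓ w + b n ⊓ w‖ := by
      apply HasSolidNorm.solid
      rw [abs_of_nonneg h0, abs_of_nonneg hsum0]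
      exact h1
    refine hnorm.trans ((norm_add_le _ _).trans ?_)
    rw [abs_of_nonneg (ha0 n), abs_of_nonneg (hb0 n)]
  have hlim : Tendsto (fun n => ‖|a n| ⊓ w‖ + ‖|b n| ⊓ w‖) atTop (nhds 0) := by
    simpa using hTa'.add hSb'
  exact squeeze_zero (fun n => norm_nonneg _) key hlim
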